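/- The number of cubes of side length ε/d in the rectangular grid of ℝ^d (spaced at width ε/d in each coordinate) that intersect the ℓ¹-ball S_δ = {u ∈ ℝ^d : ‖u‖₁ ≤ δ} is at most (2d(δ+ε)/ε)^d / d!, which is bounded above by (2e(δ+ε)/ε)^d. -/

import Mathlib

open Finset

private noncomputable def msOf (d N : ℕ) (m : Fin d → ℕ) : Multiset (Fin (d + 1)) :=
  (N - ∑ j, m j) • ({0} : Multiset (Fin (d + 1))) +
    ∑ j : Fin d, m j • ({j.succ} : Multiset (Fin (d + 1)))

private lemma msOf_card (d N : ℕ) (m : Fin d → ℕ) (h : ∑ j, m j ≤ N) :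
    Multiset.card (msOf d N m) = N := by
  simp only [msOf, Multiset.card_add, Multiset.card_nsmul, Multiset.card_singleton, mul_one]
  rw [Multiset.card_sum]
  simp only [Multiset.card_nsmul, Multiset.card_singleton, mul_one]
  exact Nat.sub_add_cancel h

private lemma msOf_count (d N : ℕ) (m : Fin d → ℕ) (j : Fin d) :
    Multiset.count j.succ (msOf d N m) = m j := by
  classical
  simp only [msOf, Multiset.count_add, Multiset.count_nsmul, Multiset.count_singleton,
    Multiset.count_sum']
  rw [if_neg (Fin.succ_ne_zero j)]
  simp [Fin.succ_inj, mul_ite, Finset.sum_ite_eq]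

private lemma msOf_inj (d N : ℕ) {m₁ m₂ : Fin d → ℕ}
    (h : msOf d N m₁ = msOf d N m₂) : m₁ = m₂ := by
  funext j
  have := congrArg (Multiset.count j.succ) h
  rwa [msOf_count, msOf_count] at this

private lemma d_pow_le (d : ℕ) : ((d : ℝ)) ^ d / (Nat.factorial d) ≤ Real.exp 1 ^ d := by
  have h1 : ((d : ℝ)) ^ d / (Nat.factorial d) ≤
      ∑ i ∈ Finset.range (d + 1), (d : ℝ) ^ i / (Nat.factorial i) := by
    refine Finset.single_le_sum (f := fun i => (d : ℝ) ^ i / (Nat.factorial i)) ?_ ?_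
    · intro i _
      positivity
    · exact Finset.self_mem_range_succ d
  have h2 : ∑ i ∈ Finset.range (d + 1), (d : ℝ) ^ i / (Nat.factorial i) ≤ Real.exp d :=
    Real.sum_le_exp_of_nonneg (by positivity) _
  have h3 : Real.exp (d : ℝ) = Real.exp 1 ^ d := by
    rw [← Real.exp_nat_mul, mul_one]
  linarith

/-- The number of grid cubes of side ε/d intersecting the ℓ¹-ball of radius δ
is at most (2d(δ+ε)/ε)^d / d! ≤ (2e(δ+ε)/ε)^d. -/
theorem stmt_2
    (d : ℕ) (hd : 1 ≤ d) (δ ε : ℝ) (hδ : 0 < δ) (hε : 0 < ε) :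
    (Nat.card {z : Fin d → ℤ |
        ∃ u : Fin d → ℝ,
          (∀ j, (z j : ℝ) * (ε / d) ≤ u j ∧ u j ≤ ((z j : ℝ) + 1) * (ε / d)) ∧
          ∑ j, |u j| ≤ δ} : ℝ)
      ≤ (2 * d * (δ + ε) / ε) ^ d / (Nat.factorial d)
    ∧ (2 * d * (δ + ε) / ε) ^ d / (Nat.factorial d)
      ≤ (2 * Real.exp 1 * (δ + ε) / ε) ^ d := by
  classical
  have hd0 : (0 : ℝ) < d := by exact_mod_cast hd
  set N : ℕ := ⌊d * δ / ε⌋₊ with hNdef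
  constructor
  · -- counting part
    -- the map m j = |z j| (folded for negatives)
    set S := {z : Fin d → ℤ |
        ∃ u : Fin d → ℝ,
          (∀ j, (z j : ℝ) * (ε / d) ≤ u j ∧ u j ≤ ((z j : ℝ) + 1) * (ε / d)) ∧
          ∑ j, |u j| ≤ δ} with hS
    have key : ∀ z ∈ S, ∑ j, (if z j < 0 then -z j - 1 else z j).toNat ≤ N := by
      intro z hz
      obtain ⟨u, hu, hsum⟩ := hz
      have hstep : ∀ j, ((if z j < 0 then -z j - 1 else z j).toNat : ℝ) * (ε / d) ≤ |u j| := by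
        intro j
        have hεd : (0 : ℝ) < ε / d := by positivity
        by_cases hzj : z j < 0
        · have hz1 : z j ≤ -1 := by omega
          have huj : u j ≤ ((z j : ℝ) + 1) * (ε / d) := (hu j).2
          have hle0 : ((z j : ℝ) + 1) * (ε / d) ≤ 0 := by
            apply mul_nonpos_of_nonpos_of_nonneg
            · have : ((z j : ℝ)) ≤ -1 := by exact_mod_cast hz1
              linarith
            · linarith
          have : |u j| ≥ -u j := neg_le_abs _
          have htn : ((if z j < 0 then -z j - 1 else z j).toNat : ℝ) = -(z j : ℝ) - 1 := by
            rw [if_pos hzj]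
            have h0 : (0:ℤ) ≤ -z j - 1 := by omega
            have h1 : (((-z j - 1).toNat : ℤ)) = -z j - 1 := Int.toNat_of_nonneg h0
            exact_mod_cast h1
          rw [htn]
          have : -(((z j : ℝ) + 1) * (ε / d)) ≤ -u j := by linarith
          calc (-(z j : ℝ) - 1) * (ε / d) = -(((z j : ℝ) + 1) * (ε / d)) := by ring
            _ ≤ -u j := this
            _ ≤ |u j| := neg_le_abs _
        · have hz0 : 0 ≤ z j := by omega
          have htn : ((if z j < 0 then -z j - 1 else z j).toNat : ℝ) = (z j : ℝ) := by
            rw [if_neg hzj]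
            exact_mod_cast Int.toNat_of_nonneg hz0
          rw [htn]
          calc (z j : ℝ) * (ε / d) ≤ u j := (hu j).1
            _ ≤ |u j| := le_abs_self _
      have hsum2 : (∑ j, ((if z j < 0 then -z j - 1 else z j).toNat : ℝ)) * (ε / d) ≤ δ := by
        rw [Finset.sum_mul]
        exact le_trans (Finset.sum_le_sum fun j _ => hstep j) hsum
      have hnat : ((∑ j, (if z j < 0 then -z j - 1 else z j).toNat : ℕ) : ℝ) ≤ d * δ / ε := by
        rw [Nat.cast_sum]
        have hmul : (∑ j, ((if z j < 0 then -z j - 1 else z j).toNat : ℝ)) * ε ≤ δ * d := by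
          have h := mul_le_mul_of_nonneg_right hsum2 (le_of_lt hd0)
          calc (∑ j, ((if z j < 0 then -z j - 1 else z j).toNat : ℝ)) * ε
              = (∑ j, ((if z j < 0 then -z j - 1 else z j).toNat : ℝ)) * (ε / d) * d := by
                field_simp
            _ ≤ δ * d := h
        rw [le_div_iff₀ hε]
        linarith
      exact Nat.le_floor hnat
    -- the injection
    set T := (Fin d → Bool) × Sym (Fin (d + 1)) N with hT
    have hinj : Nat.card S ≤ Nat.card T := by
      apply Nat.card_le_card_of_injective
        (f := fun (zp : S) =>
          ((fun j => decide (zp.1 j < 0),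
            ⟨msOf d N (fun j => (if zp.1 j < 0 then -zp.1 j - 1 else zp.1 j).toNat),
              msOf_card _ _ _ (key zp.1 zp.2)⟩) : T))
      intro a b h
      simp only [Prod.mk.injEq] at h
      obtain ⟨hb, hm⟩ := Prod.ext_iff.mp h
      have hmval : msOf d N (fun j => (if a.1 j < 0 then -a.1 j - 1 else a.1 j).toNat)
          = msOf d N (fun j => (if b.1 j < 0 then -b.1 j - 1 else b.1 j).toNat) :=
        congrArg (fun s : Sym (Fin (d+1)) N => (s : Multiset (Fin (d+1)))) hm
      have hmeq := msOf_inj d N hmval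
      apply Subtype.ext
      funext j
      have hb' : decide (a.1 j < 0) = decide (b.1 j < 0) := congrFun hb j
      have hm' : (if a.1 j < 0 then -a.1 j - 1 else a.1 j).toNat
          = (if b.1 j < 0 then -b.1 j - 1 else b.1 j).toNat := congrFun hmeq j
      simp only [decide_eq_decide] at hb'
      by_cases h1 : a.1 j < 0
      · have h2 : b.1 j < 0 := hb'.mp h1
        rw [if_pos h1, if_pos h2] at hm'
        omega
      · have h2 : ¬ b.1 j < 0 := fun h => h1 (hb'.mpr h)
        rw [if_neg h1, if_neg h2] at hm'
        omega
    have hcardT : Nat.card T = 2 ^ d * Nat.choose (N + d) d := by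
      rw [Nat.card_eq_fintype_card, Fintype.card_prod, Fintype.card_fun, Fintype.card_bool,
        Fintype.card_fin, Sym.card_sym_eq_choose]
      congr 1
      rw [Fintype.card_fin]
      have : d + 1 + N - 1 = d + N := by omega
      rw [this, Nat.add_comm d N, ← Nat.choose_symm_add, Nat.add_comm N d]
    -- real estimates
    have hfloor : (N : ℝ) ≤ d * δ / ε := Nat.floor_le (by positivity)
    have hNd : 2 * ((N : ℝ) + d) ≤ 2 * d * (δ + ε) / ε := by
      have : 2 * (d : ℝ) * (δ + ε) / ε = 2 * (d * δ / ε) + 2 * d := by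
        field_simp
      rw [this]; linarith
    calc (Nat.card S : ℝ) ≤ (Nat.card T : ℝ) := by exact_mod_cast hinj
      _ = 2 ^ d * (Nat.choose (N + d) d : ℝ) := by rw [hcardT]; push_cast; ring
      _ ≤ 2 ^ d * (((N + d : ℕ) : ℝ) ^ d / (Nat.factorial d)) := by
          apply mul_le_mul_of_nonneg_left (Nat.choose_le_pow_div d (N + d)) (by positivity)
      _ = (2 * ((N : ℝ) + d)) ^ d / (Nat.factorial d) := by
          push_cast; rw [mul_pow]; ring
      _ ≤ (2 * d * (δ + ε) / ε) ^ d / (Nat.factorial d) := by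
          apply div_le_div_of_nonneg_right ?_ (by positivity) |>.trans_eq rfl
          · exact pow_le_pow_left₀ (by positivity) hNd d
  · -- second part
    have h1 : (2 * (d : ℝ) * (δ + ε) / ε) ^ d = (2 * (δ + ε) / ε) ^ d * (d : ℝ) ^ d := by
      rw [← mul_pow]; congr 1; ring
    have h2 : (2 * Real.exp 1 * (δ + ε) / ε) ^ d = (2 * (δ + ε) / ε) ^ d * Real.exp 1 ^ d := by
      rw [← mul_pow]; congr 1; ring
    rw [h1, h2, mul_div_assoc]
    apply mul_le_mul_of_nonneg_left (d_pow_le d) (by positivity)
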